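/- Suppose Γ : closure(Π) × [0,T] → ℝ is continuous, C^{2,1} for t > 0, satisfies (L+1)Γ ≤ 0 in Π × (0,T] where L = ∂_t + b·∇ − Δ + (2/r)∂_r with b continuous and bounded, satisfies (∂_n + 2)Γ ≤ 0 on ∂Π × (0,T], and Γ(·,0) ≤ 0. If in addition Γ is bounded and attains its supremum somewhere in closure(Π) × [0,T], then Γ ≤ 0 on Π × [0,T]. -/

import Mathlib

abbrev E3 := EuclideanSpace ℝ (Fin 3)

noncomputable def cylRad (x : E3) : ℝ := Real.sqrt ((x 0) ^ 2 + (x 1) ^ 2)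

def cylExt : Set E3 := {x | 1 < cylRad x}

noncomputable def pd (f : E3 → ℝ) (i : Fin 3) (x : E3) : ℝ :=
  fderiv ℝ f x (EuclideanSpace.single i 1)

noncomputable def lap (f : E3 → ℝ) (x : E3) : ℝ := ∑ i, pd (fun y => pd f i y) i x

noncomputable def radD (f : E3 → ℝ) (x : E3) : ℝ :=
  (x 0 * pd f 0 x + x 1 * pd f 1 x) / cylRad x


lemma cylRad_continuous : Continuous cylRad := by
  unfold cylRad; fun_prop

lemma isOpen_cylExt : IsOpen cylExt :=
  isOpen_lt continuous_const cylRad_continuous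

lemma one_le_of_mem_closure {x : E3} (hx : x ∈ closure cylExt) : 1 ≤ cylRad x := by
  have hcl : IsClosed {y : E3 | 1 ≤ cylRad y} :=
    isClosed_le continuous_const cylRad_continuous
  have hsub : closure cylExt ⊆ {y : E3 | 1 ≤ cylRad y} :=
    closure_minimal (fun y (hy : 1 < cylRad y) => hy.le) hcl
  exact hsub hx

/-- second derivative test (necessary condition) -/
lemma deriv2_nonpos_of_isLocalMax {g : ℝ → ℝ} (hg : ContDiff ℝ 2 g) (h : IsLocalMax g 0) :
    deriv (deriv g) 0 ≤ 0 := by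
  by_contra hc
  push_neg at hc
  have hg2 : ContDiff ℝ (1 + 1) g := by
    have : ((1:WithTop ℕ∞) + 1) = 2 := by norm_num
    rw [this]; exact hg
  have hdg1 : ContDiff ℝ 1 (deriv g) := (contDiff_succ_iff_deriv.mp hg2).2.2
  have hd0 : deriv g 0 = 0 := h.deriv_eq_zero
  have hder : HasDerivAt (deriv g) (deriv (deriv g) 0) 0 :=
    ((hdg1.differentiable one_ne_zero) 0).hasDerivAt
  have hslope : Filter.Tendsto (slope (deriv g) 0) (nhdsWithin 0 {(0:ℝ)}ᶜ)
      (nhds (deriv (deriv g) 0)) := hasDerivAt_iff_tendsto_slope.mp hder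
  have hpos : ∀ᶠ x in nhdsWithin (0:ℝ) (Set.Ioi 0), 0 < deriv g x := by
    have h1 : ∀ᶠ x in nhdsWithin 0 {(0:ℝ)}ᶜ, 0 < slope (deriv g) 0 x :=
      hslope.eventually (eventually_gt_nhds hc)
    have h2 : ∀ᶠ x in nhdsWithin (0:ℝ) (Set.Ioi 0), 0 < slope (deriv g) 0 x :=
      h1.filter_mono (nhdsWithin_mono 0 (fun x hx => ne_of_gt hx))
    filter_upwards [h2, self_mem_nhdsWithin] with x hx hx'
    have hx0 : (0:ℝ) < x := hx'
    have hs : slope (deriv g) 0 x = deriv g x / x := by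
      rw [slope_def_field]; rw [hd0]; ring
    rw [hs] at hx
    have := mul_pos hx hx0
    rwa [div_mul_cancel₀ _ (ne_of_gt hx0)] at this
  have hle : ∀ᶠ x in nhdsWithin (0:ℝ) (Set.Ioi 0), g x ≤ g 0 :=
    (h : ∀ᶠ x in nhds (0:ℝ), g x ≤ g 0).filter_mono nhdsWithin_le_nhds
  obtain ⟨δ, hδpos, hδ⟩ := mem_nhdsGT_iff_exists_Ioc_subset.mp (hpos.and hle)
  have hδpos' : (0:ℝ) < δ := hδpos
  have hmono : StrictMonoOn g (Set.Icc 0 δ) := by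
    apply strictMonoOn_of_deriv_pos (convex_Icc 0 δ) (hg.continuous.continuousOn)
    intro x hx
    rw [interior_Icc] at hx
    exact (hδ ⟨hx.1, hx.2.le⟩).1
  have h1 : g 0 < g δ := hmono (Set.left_mem_Icc.2 hδpos'.le) (Set.right_mem_Icc.2 hδpos'.le) hδpos'
  have h2 : g δ ≤ g 0 := (hδ ⟨hδpos', le_rfl⟩).2
  linarith

lemma line_hasDerivAt {f : E3 → ℝ} (hf : Differentiable ℝ f) (x v : E3) (s : ℝ) :
    HasDerivAt (fun s : ℝ => f (x + s • v)) (fderiv ℝ f (x + s • v) v) s := by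
  have hL : HasDerivAt (fun s : ℝ => x + s • v) v s := by
    simpa using ((hasDerivAt_id s).smul_const v).const_add x
  have := (hf (x + s • v)).hasFDerivAt.comp_hasDerivAt s hL
  exact this

lemma deriv2_line {f : E3 → ℝ} (hf : ContDiff ℝ 2 f) (x : E3) (i : Fin 3) :
    deriv (deriv (fun s : ℝ => f (x + s • EuclideanSpace.single i 1))) 0
      = pd (fun y => pd f i y) i x := by
  set e : E3 := EuclideanSpace.single i 1 with he
  have hfd : Differentiable ℝ f := hf.differentiable (by norm_num)
  have h1 : deriv (fun s : ℝ => f (x + s • e)) = fun s => fderiv ℝ f (x + s • e) e :=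
    funext fun s => (line_hasDerivAt hfd x e s).deriv
  rw [h1]
  have h2 : ContDiff ℝ 1 (fderiv ℝ f) := hf.fderiv_right (by norm_num)
  have hpd : Differentiable ℝ (fun y => fderiv ℝ f y e) :=
    (h2.differentiable one_ne_zero).clm_apply (differentiable_const e)
  have hx0 : (fun s : ℝ => x + s • e) 0 = x := by simp
  have hF : HasFDerivAt (fun y => fderiv ℝ f y e) (fderiv ℝ (fun y => fderiv ℝ f y e) x)
      ((fun s : ℝ => x + s • e) 0) := by
    rw [hx0]; exact (hpd x).hasFDerivAt
  have hL : HasDerivAt (fun s : ℝ => x + s • e) e 0 := by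
    simpa using ((hasDerivAt_id (0:ℝ)).smul_const e).const_add x
  have hcomp := hF.comp_hasDerivAt 0 hL
  have : deriv (fun s : ℝ => fderiv ℝ f (x + s • e) e) 0
      = fderiv ℝ (fun y => fderiv ℝ f y e) x e := by
    have := hcomp.deriv
    exact this
  rw [this]
  rfl

/-- parabolic maximum principle with Robin boundary condition, case of an
    attained supremum: if (L+1)Γ ≤ 0 in Π × (0,T], (∂_n+2)Γ ≤ 0 on ∂Π × (0,T], Γ(·,0) ≤ 0,
    and the bounded Γ attains its supremum, then Γ ≤ 0 on Π × [0,T]. -/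
theorem stmt5 (T : ℝ) (hT : 0 < T) (b : E3 → E3) (hb : Continuous b)
    (hbB : ∃ B : ℝ, ∀ x, ‖b x‖ ≤ B)
    (Γ : E3 → ℝ → ℝ)
    (hcont : ContinuousOn (fun p : E3 × ℝ => Γ p.1 p.2) (closure cylExt ×ˢ Set.Icc 0 T))
    (hregx : ∀ t ∈ Set.Ioc 0 T, ContDiff ℝ 2 (fun x => Γ x t))
    (hregt : ∀ x ∈ closure cylExt, ∀ t ∈ Set.Ioc 0 T,
      DifferentiableWithinAt ℝ (Γ x) (Set.Icc 0 T) t)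
    (heq : ∀ x ∈ cylExt, ∀ t ∈ Set.Ioc 0 T,
      derivWithin (Γ x) (Set.Icc 0 T) t
        + (∑ i, b x i * pd (fun y => Γ y t) i x)
        - lap (fun y => Γ y t) x
        + (2 / cylRad x) * radD (fun y => Γ y t) x
        + Γ x t ≤ 0)
    (hRobin : ∀ x, cylRad x = 1 → ∀ t ∈ Set.Ioc 0 T,
      -(radD (fun y => Γ y t) x) + 2 * Γ x t ≤ 0)
    (hinit : ∀ x ∈ closure cylExt, Γ x 0 ≤ 0)
    (hbdd : ∃ C : ℝ, ∀ x ∈ closure cylExt, ∀ t ∈ Set.Icc 0 T, Γ x t ≤ C)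
    (hattain : ∃ x₁ ∈ closure cylExt, ∃ t₁ ∈ Set.Icc 0 T,
      ∀ x ∈ closure cylExt, ∀ t ∈ Set.Icc 0 T, Γ x t ≤ Γ x₁ t₁) :
    ∀ x ∈ cylExt, ∀ t ∈ Set.Icc 0 T, Γ x t ≤ 0 := by
  obtain ⟨x₁, hx₁, t₁, ht₁, hM⟩ := hattain
  have key : Γ x₁ t₁ ≤ 0 := by
    by_contra hpos
    push_neg at hpos
    -- t₁ > 0
    rcases eq_or_lt_of_le ht₁.1 with h0 | ht₁pos
    · exact absurd (hinit x₁ hx₁) (by rw [← h0] at hpos; linarith)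
    have ht₁Ioc : t₁ ∈ Set.Ioc 0 T := ⟨ht₁pos, ht₁.2⟩
    set f : E3 → ℝ := fun y => Γ y t₁ with hfdef
    have hf : ContDiff ℝ 2 f := hregx t₁ ht₁Ioc
    have hfdiff : Differentiable ℝ f := hf.differentiable (by norm_num)
    -- time derivative is nonneg
    have hdt : 0 ≤ derivWithin (Γ x₁) (Set.Icc 0 T) t₁ := by
      have hdw := (hregt x₁ hx₁ t₁ ht₁Ioc).hasDerivWithinAt
      have hmaxon : IsLocalMaxOn (Γ x₁) (Set.Icc 0 T) t₁ :=
        Filter.eventually_of_mem self_mem_nhdsWithin (fun t ht => hM x₁ hx₁ t ht)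
      have hseg : segment ℝ t₁ (t₁ + (-t₁)) ⊆ Set.Icc 0 T := by
        rw [add_neg_cancel, segment_symm, segment_eq_Icc ht₁pos.le]
        exact Set.Icc_subset_Icc_right ht₁.2
      have hcone : -t₁ ∈ posTangentConeAt (Set.Icc 0 T) t₁ :=
        mem_posTangentConeAt_of_segment_subset hseg
      have := hmaxon.hasFDerivWithinAt_nonpos hdw.hasFDerivWithinAt hcone
      simp only [ContinuousLinearMap.toSpanSingleton_apply,
        smul_eq_mul] at this
      nlinarith
    have h1r : 1 ≤ cylRad x₁ := one_le_of_mem_closure hx₁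
    rcases eq_or_lt_of_le h1r with hbd | hint
    · -- boundary case : cylRad x₁ = 1
      have hr1 : cylRad x₁ = 1 := hbd.symm
      set ν : E3 := (x₁ 0) • EuclideanSpace.single 0 1 + (x₁ 1) • EuclideanSpace.single 1 1
        with hν
      have hν0 : ν 0 = x₁ 0 := by
        simp [hν, EuclideanSpace.single_apply]
      have hν1 : ν 1 = x₁ 1 := by
        simp [hν, EuclideanSpace.single_apply]
      have hν2 : ν 2 = 0 := by
        simp [hν, EuclideanSpace.single_apply]
      have hsq : (x₁ 0) ^ 2 + (x₁ 1) ^ 2 = 1 := by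
        have h := hr1
        unfold cylRad at h
        have hnn : (0:ℝ) ≤ (x₁ 0) ^ 2 + (x₁ 1) ^ 2 := by positivity
        nlinarith [Real.sq_sqrt hnn, h]
      -- segment from x₁ outward stays in closure
      have hseg : segment ℝ x₁ (x₁ + ν) ⊆ closure cylExt := by
        rw [segment_eq_image']
        rintro p ⟨θ, hθ, rfl⟩
        rcases eq_or_lt_of_le hθ.1 with hθ0 | hθpos
        · simp only [← hθ0, zero_smul, add_zero]
          simpa using hx₁
        · apply subset_closure
          show 1 < cylRad (x₁ + θ • (x₁ + ν - x₁))
          have hcoord0 : (x₁ + θ • (x₁ + ν - x₁)) 0 = x₁ 0 + θ * x₁ 0 := by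
            simp [hν0, PiLp.add_apply, PiLp.smul_apply, PiLp.sub_apply, smul_eq_mul]
          have hcoord1 : (x₁ + θ • (x₁ + ν - x₁)) 1 = x₁ 1 + θ * x₁ 1 := by
            simp [hν1, PiLp.add_apply, PiLp.smul_apply, PiLp.sub_apply, smul_eq_mul]
          unfold cylRad
          rw [hcoord0, hcoord1]
          have heq2 : (x₁ 0 + θ * x₁ 0) ^ 2 + (x₁ 1 + θ * x₁ 1) ^ 2 = (1 + θ) ^ 2 := by
            nlinarith [hsq]
          rw [heq2, Real.sqrt_sq (by linarith : (0:ℝ) ≤ 1 + θ)]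
          linarith
      have hcone : ν ∈ posTangentConeAt (closure cylExt) x₁ := by
        have := mem_posTangentConeAt_of_segment_subset (x := x₁) (y := ν) (s := closure cylExt)
        exact this hseg
      have hmaxon : IsLocalMaxOn f (closure cylExt) x₁ :=
        Filter.eventually_of_mem self_mem_nhdsWithin (fun y hy => hM y hy t₁ ht₁)
      have hFD : HasFDerivWithinAt f (fderiv ℝ f x₁) (closure cylExt) x₁ :=
        (hfdiff x₁).hasFDerivAt.hasFDerivWithinAt
      have hdir : fderiv ℝ f x₁ ν ≤ 0 := hmaxon.hasFDerivWithinAt_nonpos hFD hcone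
      have hdir' : fderiv ℝ f x₁ ν = x₁ 0 * pd f 0 x₁ + x₁ 1 * pd f 1 x₁ := by
        rw [hν]
        simp [pd, map_add, map_smul, smul_eq_mul]
      have hradD : radD f x₁ ≤ 0 := by
        unfold radD
        rw [hr1, div_one, ← hdir']
        exact hdir
      have hRob := hRobin x₁ hr1 t₁ ht₁Ioc
      rw [← hfdef] at hRob
      linarith
    · -- interior case
      have hx₁int : x₁ ∈ cylExt := hint
      have hloc : IsLocalMax f x₁ := by
        filter_upwards [isOpen_cylExt.mem_nhds hx₁int] with y hy
        exact hM y (subset_closure hy) t₁ ht₁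
      have hgrad : fderiv ℝ f x₁ = 0 := hloc.fderiv_eq_zero
      have hpd0 : ∀ i, pd f i x₁ = 0 := by
        intro i; simp [pd, hgrad]
      have hbsum : (∑ i, b x₁ i * pd f i x₁) = 0 :=
        Finset.sum_eq_zero fun i _ => by rw [hpd0 i, mul_zero]
      have hradD : radD f x₁ = 0 := by
        unfold radD; rw [hpd0 0, hpd0 1]; simp
      have hlap : lap f x₁ ≤ 0 := by
        unfold lap
        apply Finset.sum_nonpos
        intro i _
        rw [← deriv2_line hf x₁ i]
        apply deriv2_nonpos_of_isLocalMax
        · exact hf.comp ((contDiff_const.add (contDiff_id.smul contDiff_const)))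
        · have hloc' : IsLocalMax f ((fun s : ℝ => x₁ + s • EuclideanSpace.single i (1:ℝ)) 0) := by
            simpa using hloc
          exact IsLocalMax.comp_continuous
            (g := fun s : ℝ => x₁ + s • EuclideanSpace.single i (1:ℝ)) (b := 0)
            hloc' (by fun_prop)
      have hheq := heq x₁ hx₁int t₁ ht₁Ioc
      rw [← hfdef] at hheq
      rw [hbsum, hradD] at hheq
      have : derivWithin (Γ x₁) (Set.Icc 0 T) t₁ - lap f x₁ + Γ x₁ t₁ ≤ 0 := by linarith
      linarith
  intro x hx t ht
  exact le_trans (hM x (subset_closure hx) t ht) key
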